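/- Let b ≥ 2, d ≥ 1, n ≥ 1, k ≥ 0 be integers with gcd(b, d) = 1 and d dividing n + 1, let ω ∈ ℂ be a primitive d-th root of unity, and let S_{b,d} = {s ∈ ℕ : s ≥ 1 and there are no u, v ∈ ℕ with s = ub + vd}. Then ω^k times the coefficient of t^k in the polynomial ∏_{i=0}^{n−1} (1 + ω^i t + (ω^i t)^2 + ⋯ + (ω^i t)^(b−1)) ∈ ℂ[t] equals binom^{(b)}((n+1)/d − 1, k/d) + ∑_{s ∈ S_{b,d}} binom^{(b)}((n+1)/d − 1, (k − 1 − s)/d) − ∑_{s ∈ S_{b,d}} binom^{(b)}((n+1)/d − 1, (k − s)/d), where a term binom^{(b)}(u, v) is defined to be 0 whenever v is not a nonnegative integer (in particular whenever d does not divide the relevant numerator). -/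

import Mathlib

open Polynomial Finset

/-- `binomB b n k` is the coefficient of `t^k` in `(1 + t + ⋯ + t^(b-1))^n`. -/
noncomputable def binomB (b n k : ℕ) : ℕ :=
  (((∑ j ∈ Finset.range b, (X : Polynomial ℕ) ^ j)) ^ n).coeff k

section PartA

attribute [local instance] Classical.propDecidable

variable (b d : ℕ)

/-- representability over ℤ -/
def RepZ (z : ℤ) : Prop := ∃ u v : ℕ, z = u * b + v * d

variable {b d}

lemma repZ_nonneg {z : ℤ} (h : RepZ b d z) : 0 ≤ z := by
  obtain ⟨u, v, rfl⟩ := h; positivity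

lemma repZ_zero : RepZ b d 0 := ⟨0, 0, by simp⟩

lemma repZ_add_b {z : ℤ} (h : RepZ b d z) : RepZ b d (z + b) := by
  obtain ⟨u, v, rfl⟩ := h; exact ⟨u + 1, v, by push_cast; ring⟩

lemma repZ_add_d {z : ℤ} (h : RepZ b d z) : RepZ b d (z + d) := by
  obtain ⟨u, v, rfl⟩ := h; exact ⟨u, v + 1, by push_cast; ring⟩

lemma repZ_split {z : ℤ} (hz : z ≠ 0) :
    RepZ b d z ↔ RepZ b d (z - b) ∨ RepZ b d (z - d) := by
  constructor
  · rintro ⟨u, v, rfl⟩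
    rcases Nat.eq_zero_or_pos u with hu | hu
    · rcases Nat.eq_zero_or_pos v with hv | hv
      · exfalso; apply hz; simp [hu, hv]
      · right; exact ⟨u, v - 1, by push_cast [Nat.cast_sub hv]; ring⟩
    · left; exact ⟨u - 1, v, by push_cast [Nat.cast_sub hu]; ring⟩
  · rintro (h | h)
    · simpa using repZ_add_b h
    · simpa using repZ_add_d h

lemma not_repZ_frob (hb : 2 ≤ b) (hd : 1 ≤ d) (hbd : Nat.gcd b d = 1) :
    ¬ RepZ b d ((b : ℤ) * d - b - d) := by
  rintro ⟨u, v, h⟩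
  have hnat : (u + 1) * b + (v + 1) * d = b * d := by
    have : ((u + 1) * b + (v + 1) * d : ℤ) = (b * d : ℕ) := by push_cast; linarith
    exact_mod_cast this
  have hdvd : d ∣ (u + 1) * b := by
    have h1 : d ∣ b * d := dvd_mul_left d b
    have h2 : d ∣ (v + 1) * d := dvd_mul_left d (v + 1)
    have h3 : (u + 1) * b = b * d - (v + 1) * d := by omega
    rw [h3]; exact Nat.dvd_sub h1 h2
  have hcop : Nat.Coprime d b := Nat.coprime_comm.mp hbd
  have hdu : d ∣ (u + 1) := hcop.dvd_of_dvd_mul_right hdvd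
  have hle : d ≤ u + 1 := Nat.le_of_dvd (by omega) hdu
  have hle2 : d * b ≤ (u + 1) * b := Nat.mul_le_mul_right b hle
  have h4 : 0 < (v + 1) * d := Nat.mul_pos (by omega) hd
  have h5 : b * d = d * b := Nat.mul_comm b d
  linarith

lemma repZ_pair (hb : 2 ≤ b) (hd : 1 ≤ d) (hbd : Nat.gcd b d = 1) (z : ℤ) :
    (RepZ b d (z - b) ∧ RepZ b d (z - d)) ↔ (RepZ b d (z - b - d) ∨ z = (b : ℤ) * d) := by
  constructor
  · rintro ⟨⟨u₁, v₁, h₁⟩, ⟨u₂, v₂, h₂⟩⟩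
    rcases Nat.eq_zero_or_pos v₁ with hv₁ | hv₁
    · rcases Nat.eq_zero_or_pos u₂ with hu₂ | hu₂
      · subst hv₁; subst hu₂
        simp only [Nat.cast_zero, zero_mul, add_zero, zero_add] at h₁ h₂
        have hz1 : z = ((u₁ + 1 : ℕ) : ℤ) * b := by push_cast; linarith
        have hz2 : z = ((v₂ + 1 : ℕ) : ℤ) * d := by push_cast; linarith
        have hnat : (u₁ + 1) * b = (v₂ + 1) * d := by
          have : (((u₁ + 1) * b : ℕ) : ℤ) = ((v₂ + 1) * d : ℕ) := by push_cast; linarith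
          exact_mod_cast this
        have hcop : Nat.Coprime d b := Nat.coprime_comm.mp hbd
        have hdu : d ∣ (u₁ + 1) := hcop.dvd_of_dvd_mul_right ⟨v₂ + 1, by rw [hnat]; ring⟩
        obtain ⟨w, hw⟩ := hdu
        have hw1 : 1 ≤ w := by
          rcases Nat.eq_zero_or_pos w with h0 | h0
          · simp [h0] at hw
          · exact h0
        rcases eq_or_lt_of_le hw1 with hw2 | hw2
        · right; rw [hz1, hw, ← hw2]; push_cast; ring
        · left
          refine ⟨d - 1, (w - 1) * b - 1, ?_⟩
          have hb1 : 1 ≤ (w - 1) * b := by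
            have : 0 < (w - 1) * b := Nat.mul_pos (by omega) (by omega)
            omega
          rw [hz1, hw]
          push_cast [Nat.cast_sub hd, Nat.cast_sub hb1, Nat.cast_sub (show 1 ≤ w by omega)]
          ring
      · left; exact ⟨u₂ - 1, v₂, by push_cast [Nat.cast_sub hu₂]; linarith [h₂]⟩
    · left; exact ⟨u₁, v₁ - 1, by push_cast [Nat.cast_sub hv₁]; linarith [h₁]⟩
  · rintro (h | rfl)
    · constructor
      · have h' := repZ_add_d h
        have e : z - b - d + d = z - b := by ring
        rwa [e] at h'
      · have h' := repZ_add_b h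
        have e : z - b - d + b = z - d := by ring
        rwa [e] at h'
    · constructor
      · exact ⟨d - 1, 0, by push_cast [Nat.cast_sub hd]; ring⟩
      · exact ⟨0, b - 1, by push_cast [Nat.cast_sub (show 1 ≤ b by omega)]; ring⟩

/-- The core convolution identity for the indicator of the numerical semigroup. -/
lemma coreC (hb : 2 ≤ b) (hd : 1 ≤ d) (hbd : Nat.gcd b d = 1) (z : ℤ) :
    (if RepZ b d z then (1 : ℂ) else 0) - (if RepZ b d (z - b) then 1 else 0)
      - (if RepZ b d (z - d) then 1 else 0) + (if RepZ b d (z - b - d) then 1 else 0)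
    = (if z = 0 then 1 else 0) - (if z = (b : ℤ) * d then 1 else 0) := by
  classical
  by_cases hz0 : z = 0
  · subst hz0
    have hA : RepZ b d 0 := repZ_zero
    have hB : ¬ RepZ b d (0 - b) := fun h => by have := repZ_nonneg h; omega
    have hC : ¬ RepZ b d (0 - d) := fun h => by have := repZ_nonneg h; omega
    have hD : ¬ RepZ b d (0 - b - d) := fun h => by have := repZ_nonneg h; omega
    have hbd0 : (0 : ℤ) ≠ (b : ℤ) * d := by
      have : (0 : ℤ) < (b : ℤ) * d := by
        exact_mod_cast Nat.mul_pos (show 0 < b by omega) (show 0 < d by omega)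
      omega
    rw [if_pos hA, if_neg hB, if_neg hC, if_neg hD, if_pos rfl, if_neg hbd0]
    ring
  · have hA := repZ_split (b := b) (d := d) hz0
    have hBC := repZ_pair hb hd hbd z
    have hExcl : z = (b : ℤ) * d → ¬ RepZ b d (z - b - d) := by
      rintro rfl; exact not_repZ_frob hb hd hbd
    by_cases hB : RepZ b d (z - b) <;> by_cases hC : RepZ b d (z - d)
    · have hor : RepZ b d (z - b - d) ∨ z = (b : ℤ) * d := hBC.mp ⟨hB, hC⟩
      by_cases hzbd : z = (b : ℤ) * d
      · have hD : ¬ RepZ b d (z - b - d) := hExcl hzbd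
        rw [if_pos (hA.mpr (Or.inl hB)), if_pos hB, if_pos hC, if_neg hD, if_neg hz0,
          if_pos hzbd]
        ring
      · have hD : RepZ b d (z - b - d) := hor.resolve_right hzbd
        rw [if_pos (hA.mpr (Or.inl hB)), if_pos hB, if_pos hC, if_pos hD, if_neg hz0,
          if_neg hzbd]
        ring
    · have hD : ¬ RepZ b d (z - b - d) := fun h => hC ((hBC.mpr (Or.inl h)).2)
      have hzbd : z ≠ (b : ℤ) * d := fun h => hC ((hBC.mpr (Or.inr h)).2)
      rw [if_pos (hA.mpr (Or.inl hB)), if_pos hB, if_neg hC, if_neg hD, if_neg hz0, if_neg hzbd]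
      ring
    · have hD : ¬ RepZ b d (z - b - d) := fun h => hB ((hBC.mpr (Or.inl h)).1)
      have hzbd : z ≠ (b : ℤ) * d := fun h => hB ((hBC.mpr (Or.inr h)).1)
      rw [if_pos (hA.mpr (Or.inr hC)), if_neg hB, if_pos hC, if_neg hD, if_neg hz0, if_neg hzbd]
      ring
    · have hD : ¬ RepZ b d (z - b - d) := fun h => hB ((hBC.mpr (Or.inl h)).1)
      have hzbd : z ≠ (b : ℤ) * d := fun h => hB ((hBC.mpr (Or.inr h)).1)
      have hAn : ¬ RepZ b d z := fun h => by rcases hA.mp h with h' | h' <;> [exact hB h'; exact hC h']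
      rw [if_neg hAn, if_neg hB, if_neg hC, if_neg hD, if_neg hz0, if_neg hzbd]
      ring

lemma rep_of_large (hd : 1 ≤ d) (hbd : Nat.gcd b d = 1) (s : ℕ) (hs : (d - 1) * b ≤ s) :
    ∃ u v : ℕ, s = u * b + v * d := by
  haveI : NeZero d := ⟨by omega⟩
  set u := ((s : ZMod d) * (b : ZMod d)⁻¹).val with hu_def
  have hu : u < d := ZMod.val_lt _
  have hub : ((u * b : ℕ) : ZMod d) = (s : ZMod d) := by
    push_cast
    rw [hu_def, ZMod.natCast_val, ZMod.cast_id]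
    rw [mul_assoc, ZMod.inv_mul_of_unit]
    · ring
    · exact (ZMod.unitOfCoprime b hbd).isUnit
  have hle : u * b ≤ s := le_trans (Nat.mul_le_mul_right b (by omega : u ≤ d - 1)) hs
  have hdvd : d ∣ (s - u * b) := by
    have h0 : ((s - u * b : ℕ) : ZMod d) = 0 := by
      rw [Nat.cast_sub hle, hub, sub_self]
    exact (ZMod.natCast_eq_zero_iff _ _).mp h0
  obtain ⟨v, hv⟩ := hdvd
  refine ⟨u, v, ?_⟩
  rw [mul_comm v d, ← hv, Nat.add_sub_cancel' hle]


lemma repZ_natCast {b d : ℕ} (s : ℕ) : RepZ b d (s : ℤ) ↔ ∃ u v : ℕ, s = u * b + v * d := by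
  constructor <;> rintro ⟨u, v, h⟩ <;> exact ⟨u, v, by exact_mod_cast h⟩

end PartA

section PartB
attribute [local instance] Classical.propDecidable
variable {b d : ℕ}

lemma ind_step (a N : ℕ) :
    (if a ≤ N then (1 : ℂ) else 0) - (if a + 1 ≤ N then 1 else 0) =
      if N = a then 1 else 0 := by
  by_cases h1 : a ≤ N <;> by_cases h2 : a + 1 ≤ N <;> by_cases h3 : N = a <;>
    first
      | (exfalso; omega)
      | simp [h1, h2, h3]

lemma ind_zero (N : ℕ) :
    (if 1 ≤ N then (1 : ℂ) else 0) - 1 = -(if N = 0 then 1 else 0) := by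
  by_cases h : 1 ≤ N
  · simp [h, (show N ≠ 0 by omega)]
  · simp [h, (show N = 0 by omega)]

lemma gapE1 (hb : 2 ≤ b) (hd : 1 ≤ d) (hbd : Nat.gcd b d = 1)
    (S : Finset ℕ) (hS : ∀ s : ℕ, s ∈ S ↔ ¬ RepZ b d (s : ℤ)) :
    ((X : ℂ[X]) - 1) * (∑ s ∈ S, X ^ s) * ((1 - X ^ b) * (1 - X ^ d)) =
      X ^ b + X ^ d + X ^ (b * d + 1) - (X ^ 1 + X ^ (b + d) + X ^ (b * d)) := by
  set η : ℤ → ℂ := fun z => if RepZ b d z then (1 : ℂ) else 0 with hη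
  set G : ℂ[X] := ∑ s ∈ S, X ^ s with hGdef
  have hGc : ∀ t : ℕ, G.coeff t = 1 - η (t : ℤ) := by
    intro t
    rw [hGdef, finset_sum_coeff]
    simp only [coeff_X_pow]
    rw [Finset.sum_ite_eq S t (fun _ => (1 : ℂ))]
    by_cases h : RepZ b d (t : ℤ) <;> simp [hη, hS, h]
  have key : ∀ a N : ℕ, (G * X ^ a).coeff N =
      (if a ≤ N then (1 : ℂ) else 0) - η ((N : ℤ) - a) := by
    intro a N
    rw [coeff_mul_X_pow']
    by_cases h : a ≤ N
    · rw [if_pos h, if_pos h, hGc, Nat.cast_sub h]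
    · rw [if_neg h, if_neg h]
      have hn : ¬ RepZ b d ((N : ℤ) - a) := fun h' => by
        have := repZ_nonneg h'; omega
      simp [hη, hn]
  have expand : ((X : ℂ[X]) - 1) * G * ((1 - X ^ b) * (1 - X ^ d)) =
      G * X ^ 1 + G * X ^ b + G * X ^ d + G * X ^ (b + d + 1) -
        (G * X ^ 0 + G * X ^ (b + 1) + G * X ^ (d + 1) + G * X ^ (b + d)) := by
    ring
  ext N
  rw [expand]
  simp only [coeff_add, coeff_sub, key, coeff_X_pow]
  have h1 := coreC hb hd hbd (N : ℤ)
  have h2 := coreC hb hd hbd ((N : ℤ) - 1)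
  rw [show (N : ℤ) - b - d = (N : ℤ) - (b + d) by ring] at h1
  rw [show (N : ℤ) - 1 - b - d = (N : ℤ) - (b + d + 1) by ring,
      show (N : ℤ) - 1 - b = (N : ℤ) - (b + 1) by ring,
      show (N : ℤ) - 1 - d = (N : ℤ) - (d + 1) by ring] at h2
  rw [show ((if ((N : ℤ)) = 0 then (1:ℂ) else 0)) = (if N = 0 then 1 else 0) by simp] at h1
  have ebd : ((if ((N : ℤ)) = (b : ℤ) * d then (1:ℂ) else 0)) = (if N = b * d then 1 else 0) := by
    by_cases h : N = b * d
    · rw [if_pos (by exact_mod_cast h), if_pos h]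
    · rw [if_neg (fun hh => h (by exact_mod_cast hh)), if_neg h]
  rw [ebd] at h1
  have e1 : ((if ((N : ℤ) - 1) = 0 then (1:ℂ) else 0)) = (if N = 1 then 1 else 0) := by
    by_cases h : N = 1
    · rw [if_pos (by omega), if_pos h]
    · rw [if_neg (by omega), if_neg h]
  have ebd1 : ((if ((N : ℤ) - 1) = (b : ℤ) * d then (1:ℂ) else 0)) =
      (if N = b * d + 1 then 1 else 0) := by
    have hiff : ((N : ℤ) - 1 = (b : ℤ) * d) ↔ (N = b * d + 1) := by
      rw [sub_eq_iff_eq_add]; exact_mod_cast Iff.rfl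
    by_cases h : N = b * d + 1
    · rw [if_pos (hiff.mpr h), if_pos h]
    · rw [if_neg (fun hh => h (hiff.mp hh)), if_neg h]
  rw [e1, ebd1] at h2
  push_cast
  rw [if_pos (Nat.zero_le N), sub_zero]
  linear_combination h1 - h2 + ind_step b N + ind_step d N - ind_step (b + d) N + ind_zero N

lemma gapI2 (hb : 2 ≤ b) (hd : 1 ≤ d) (hbd : Nat.gcd b d = 1)
    (S : Finset ℕ) (hS : ∀ s : ℕ, s ∈ S ↔ ¬ RepZ b d (s : ℤ)) :
    (1 + ((X : ℂ[X]) - 1) * (∑ s ∈ S, X ^ s)) * ((1 - X ^ b) * (1 - X ^ d)) =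
      (1 - X ^ (b * d)) * (1 - X) := by
  linear_combination gapE1 hb hd hbd S hS

end PartB


section PartC

lemma geom_val (bn : ℕ) (z : ℂ) :
    (∑ j ∈ Finset.range bn, z ^ j) * (1 - z) = 1 - z ^ bn := by
  have h := geom_sum_mul z bn
  linear_combination -h

lemma prodVA {d : ℕ} (hd : 0 < d) {ζ : ℂ} (hζ : IsPrimitiveRoot ζ d) (y : ℂ) :
    ∏ i ∈ Finset.range d, (y - ζ ^ i) = y ^ d - 1 := by
  have h := Polynomial.X_pow_sub_one_eq_prod hd hζ
  have h2 : Polynomial.nthRootsFinset d (1 : ℂ) = (Finset.range d).image (ζ ^ ·) := by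
    rw [Polynomial.nthRootsFinset_def, hζ.nthRoots_eq (one_pow d)]
    rw [Multiset.toFinset_map]
    have e : (Multiset.range d).toFinset = Finset.range d := by ext x; simp
    rw [e]
    simp [mul_one]
  have h3 := congrArg (Polynomial.eval y) h
  rw [h2, Finset.prod_image
    (fun i hi j hj e => hζ.injOn_pow (by simpa using hi) (by simpa using hj) e)] at h3
  simpa [Polynomial.eval_prod] using h3.symm

lemma prodVB {d : ℕ} (hd : 0 < d) {ζ : ℂ} (hζ : IsPrimitiveRoot ζ d) (y : ℂ) :
    ∏ i ∈ Finset.range d, (1 - ζ ^ i * y) = 1 - y ^ d := by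
  by_cases hy : y = 0
  · simp [hy, zero_pow hd.ne']
  · have h := prodVA hd hζ y⁻¹
    have e : ∀ i ∈ Finset.range d, (1 - ζ ^ i * y) = y * (y⁻¹ - ζ ^ i) := by
      intro i _
      rw [mul_sub, mul_inv_cancel₀ hy]; ring
    rw [Finset.prod_congr rfl e, Finset.prod_mul_distrib, Finset.prod_const, h,
      Finset.card_range, mul_sub, ← mul_pow, mul_inv_cancel₀ hy, one_pow]
    ring

lemma prodVC {d : ℕ} (hd : 0 < d) {ζ : ℂ} (hζ : IsPrimitiveRoot ζ d) (y : ℂ) (M : ℕ) :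
    ∏ i ∈ Finset.range (d * M), (1 - ζ ^ i * y) = (1 - y ^ d) ^ M := by
  induction M with
  | zero => simp
  | succ M ih =>
    rw [Nat.mul_succ, Finset.prod_range_add, ih, pow_succ]
    congr 1
    calc ∏ x ∈ Finset.range d, (1 - ζ ^ (d * M + x) * y)
        = ∏ x ∈ Finset.range d, (1 - ζ ^ x * y) :=
          Finset.prod_congr rfl fun i _ => by
            rw [pow_add, pow_mul, hζ.pow_eq_one, one_pow, one_mul]
      _ = 1 - y ^ d := prodVB hd hζ y

lemma prodVD {d n m : ℕ} (hd : 0 < d) {ζ : ℂ} (hζ : IsPrimitiveRoot ζ d)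
    (hnm : n + 1 = d * m) (y : ℂ) :
    (∏ i ∈ Finset.range n, (1 - ζ ^ (i + 1) * y)) * (1 - y) = (1 - y ^ d) ^ m := by
  have h := prodVC hd hζ y m
  rw [← hnm, Finset.prod_range_succ'] at h
  simpa using h

lemma coeff_comp_C_mul_X (p : ℂ[X]) (c : ℂ) (k : ℕ) :
    (p.comp (C c * X)).coeff k = c ^ k * p.coeff k := by
  induction p using Polynomial.induction_on' with
  | add p q hp hq => simp [add_comp, hp, hq, mul_add]
  | monomial e a =>
    rw [monomial_comp, mul_pow, ← C_pow, ← mul_assoc, ← C_mul, coeff_C_mul, coeff_X_pow,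
      coeff_monomial]
    by_cases h : e = k
    · subst h; simp; ring
    · simp [h, Ne.symm h]

lemma combineVal (m' : ℕ) (P Gg Hh S1 Rv A B U W : ℂ)
    (hA : P * Gg = Hh) (hB : Hh * B = W ^ (m' + 1)) (hC : Gg * A = U ^ (m' + 1))
    (hgeo : S1 * U = W) (hI2 : Rv * (B * U) = W * A) :
    P * (A * Gg * B) = S1 ^ m' * Rv * (A * Gg * B) := by
  calc P * (A * Gg * B) = (P * Gg) * B * A := by ring
    _ = W ^ (m' + 1) * A := by rw [hA, hB]
    _ = S1 ^ m' * Rv * (A * Gg * B) := by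
        have e1 : S1 ^ m' * Rv * (A * Gg * B) = S1 ^ m' * Rv * B * (Gg * A) := by ring
        rw [e1, hC]
        have e2 : S1 ^ m' * Rv * B * U ^ (m' + 1) = (S1 * U) ^ m' * (Rv * (B * U)) := by ring
        rw [e2, hgeo, hI2]
        ring

end PartC


/-- **Theorem (alternating formula via the Sylvester set).**
Let `gcd(b,d) = 1`, `d ∣ (n+1)` and let `ω` be a primitive `d`th root of unity. The set
`S_{b,d}` of positive integers not representable as `ub + vd` is finite, and `ω^k` times
the coefficient of `t^k` in `∏_{i=0}^{n-1} (1 + ω^i t + ⋯ + (ω^i t)^(b-1))` equals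
`binom^(b)((n+1)/d - 1, k/d) + ∑_{s ∈ S_{b,d}} binom^(b)((n+1)/d - 1, (k-1-s)/d)
 - ∑_{s ∈ S_{b,d}} binom^(b)((n+1)/d - 1, (k-s)/d)`,
where a term `binom^(b)(u, v)` is `0` whenever `v` is not a nonnegative integer. -/
theorem stmt_17 (b d n k : ℕ) (hb : 2 ≤ b) (hd : 1 ≤ d) (hn : 1 ≤ n)
    (hbd : Nat.gcd b d = 1) (hdn : d ∣ (n + 1)) (ω : ℂ) (hω : IsPrimitiveRoot ω d) :
    ∃ hfin : {s : ℕ | 1 ≤ s ∧ ¬ ∃ u v : ℕ, s = u * b + v * d}.Finite,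
      ω ^ k *
          (∏ i ∈ Finset.range n,
            (∑ j ∈ Finset.range b, C ((ω ^ i) ^ j) * X ^ j)).coeff k =
        (if d ∣ k then (binomB b ((n + 1) / d - 1) (k / d) : ℂ) else 0) +
          (∑ s ∈ hfin.toFinset,
            if s + 1 ≤ k ∧ d ∣ (k - 1 - s) then
              (binomB b ((n + 1) / d - 1) ((k - 1 - s) / d) : ℂ) else 0) -
          (∑ s ∈ hfin.toFinset,
            if s ≤ k ∧ d ∣ (k - s) then
              (binomB b ((n + 1) / d - 1) ((k - s) / d) : ℂ) else 0) := by
  have hd0 : 0 < d := hd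
  have hfin : {s : ℕ | 1 ≤ s ∧ ¬ ∃ u v : ℕ, s = u * b + v * d}.Finite := by
    apply Set.Finite.subset (Set.finite_Iio ((d - 1) * b))
    rintro s ⟨hs1, hs2⟩
    rw [Set.mem_Iio]
    by_contra hcon
    exact hs2 (rep_of_large hd hbd s (by omega))
  refine ⟨hfin, ?_⟩
  have hS : ∀ s : ℕ, s ∈ hfin.toFinset ↔ ¬ RepZ b d (s : ℤ) := by
    intro s
    rw [Set.Finite.mem_toFinset, Set.mem_setOf_eq]
    constructor
    · rintro ⟨h1, h2⟩ hrep
      exact h2 ((repZ_natCast s).mp hrep)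
    · intro h
      refine ⟨?_, fun hr => h ((repZ_natCast s).mpr hr)⟩
      by_contra h0
      apply h
      rw [show s = 0 by omega]
      exact_mod_cast (repZ_zero : RepZ b d 0)
  set m := (n + 1) / d with hmdef
  have hm : n + 1 = d * m := (Nat.mul_div_cancel' hdn).symm
  have hm1 : 1 ≤ m := by
    rw [hmdef]
    exact (Nat.one_le_div_iff hd0).mpr (Nat.le_of_dvd (by omega) hdn)
  have hm' : m - 1 + 1 = m := by omega
  have hζb : IsPrimitiveRoot (ω ^ b) d := hω.pow_of_coprime b hbd
  set G : ℂ[X] := ∑ s ∈ hfin.toFinset, X ^ s with hGdef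
  set Q : ℂ[X] := (expand ℂ d (∑ j ∈ Finset.range b, X ^ j)) ^ (m - 1) with hQdef
  set Ps : ℂ[X] := ∏ i ∈ Finset.range n, ∑ j ∈ Finset.range b, C ((ω ^ (i + 1)) ^ j) * X ^ j
    with hPs
  set D : ℂ[X] := (1 - X) * (∏ i ∈ Finset.range n, (1 - C (ω ^ (i + 1)) * X)) * (1 - X ^ b)
    with hD
  have hcomp : (∏ i ∈ Finset.range n,
      ∑ j ∈ Finset.range b, C ((ω ^ i) ^ j) * X ^ j).comp (C ω * X) = Ps := by
    rw [Polynomial.prod_comp, hPs]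
    refine Finset.prod_congr rfl fun i _ => ?_
    rw [Polynomial.sum_comp]
    refine Finset.sum_congr rfl fun j _ => ?_
    rw [mul_comp, C_comp, pow_comp, X_comp, mul_pow, ← C_pow, ← mul_assoc, ← C_mul,
      ← mul_pow, ← pow_succ]
  have step1 : ω ^ k * (∏ i ∈ Finset.range n,
      ∑ j ∈ Finset.range b, C ((ω ^ i) ^ j) * X ^ j).coeff k = Ps.coeff k := by
    rw [← coeff_comp_C_mul_X, hcomp]
  have hDne : D ≠ 0 := by
    intro hh
    have h0 : D.eval 0 = 1 := by simp [hD, eval_prod, zero_pow (show b ≠ 0 by omega)]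
    rw [hh] at h0
    simp at h0
  have step2 : Ps * D = Q * (1 + (X - 1) * G) * D := by
    apply Polynomial.funext
    intro x
    simp only [hPs, hD, hQdef, hGdef, eval_mul, eval_prod, eval_finset_sum, eval_pow, eval_sub,
      eval_one, eval_add, eval_C, eval_X, expand_eval]
    have hA : (∏ i ∈ Finset.range n, ∑ j ∈ Finset.range b, (ω ^ (i + 1)) ^ j * x ^ j) *
        (∏ i ∈ Finset.range n, (1 - ω ^ (i + 1) * x)) =
        ∏ i ∈ Finset.range n, (1 - (ω ^ b) ^ (i + 1) * x ^ b) := by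
      rw [← Finset.prod_mul_distrib]
      refine Finset.prod_congr rfl fun i _ => ?_
      calc (∑ j ∈ Finset.range b, (ω ^ (i + 1)) ^ j * x ^ j) * (1 - ω ^ (i + 1) * x)
          = (∑ j ∈ Finset.range b, (ω ^ (i + 1) * x) ^ j) * (1 - ω ^ (i + 1) * x) := by
            simp [mul_pow]
        _ = 1 - (ω ^ (i + 1) * x) ^ b := geom_val b _
        _ = 1 - (ω ^ b) ^ (i + 1) * x ^ b := by rw [mul_pow, pow_right_comm]
    have hB : (∏ i ∈ Finset.range n, (1 - (ω ^ b) ^ (i + 1) * x ^ b)) * (1 - x ^ b) =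
        (1 - x ^ (b * d)) ^ (m - 1 + 1) := by
      have h := prodVD hd0 hζb hm (x ^ b)
      rwa [← pow_mul, ← hm'] at h
    have hC : (∏ i ∈ Finset.range n, (1 - ω ^ (i + 1) * x)) * (1 - x) =
        (1 - x ^ d) ^ (m - 1 + 1) := by
      have h := prodVD hd0 hω hm x
      rwa [← hm'] at h
    have hgeo : (∑ j ∈ Finset.range b, (x ^ d) ^ j) * (1 - x ^ d) = 1 - x ^ (b * d) := by
      have h := geom_val b (x ^ d)
      rwa [← pow_mul, Nat.mul_comm d b] at h
    have hI2 : (1 + (x - 1) * ∑ s ∈ hfin.toFinset, x ^ s) * ((1 - x ^ b) * (1 - x ^ d)) =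
        (1 - x ^ (b * d)) * (1 - x) := by
      have h := congrArg (Polynomial.eval x) (gapI2 hb hd hbd hfin.toFinset hS)
      simpa [eval_mul, eval_add, eval_sub, eval_pow, eval_one, eval_X, eval_finset_sum] using h
    have key := combineVal (m - 1) _ _ _ _ _ _ _ _ _ hA hB hC hgeo hI2
    linear_combination key
  have step4 : Ps = Q * (1 + (X - 1) * G) := mul_right_cancel₀ hDne step2
  have hQc : ∀ j : ℕ, Q.coeff j = if d ∣ j then (binomB b (m - 1) (j / d) : ℂ) else 0 := by
    intro j
    rw [hQdef, ← map_pow, coeff_expand hd0]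
    split_ifs with h
    · have hmap : ((∑ i ∈ Finset.range b, (X : Polynomial ℕ) ^ i) ^ (m - 1)).map
          (Nat.castRingHom ℂ) = (∑ i ∈ Finset.range b, (X : ℂ[X]) ^ i) ^ (m - 1) := by
        simp [Polynomial.map_pow, Polynomial.map_sum]
      rw [← hmap, coeff_map]
      simp [binomB]
    · rfl
  rw [step1, step4]
  have hsplit : Q * (1 + (X - 1) * G) = Q + (∑ s ∈ hfin.toFinset, Q * X ^ (s + 1)
      - ∑ s ∈ hfin.toFinset, Q * X ^ s) := by
    rw [hGdef]
    rw [show ((X : ℂ[X]) - 1) * ∑ s ∈ hfin.toFinset, X ^ s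
        = ∑ s ∈ hfin.toFinset, (X ^ (s + 1) - X ^ s) from by
      rw [Finset.mul_sum]; exact Finset.sum_congr rfl fun s _ => by ring]
    rw [Finset.sum_sub_distrib, mul_add, mul_one, mul_sub, Finset.mul_sum, Finset.mul_sum]
  rw [hsplit, coeff_add, coeff_sub, finset_sum_coeff, finset_sum_coeff, hQc k]
  have hs1 : ∀ s ∈ hfin.toFinset, (Q * X ^ (s + 1)).coeff k =
      if s + 1 ≤ k ∧ d ∣ (k - 1 - s) then (binomB b (m - 1) ((k - 1 - s) / d) : ℂ) else 0 := by
    intro s _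
    rw [coeff_mul_X_pow', hQc (k - (s + 1)), show k - (s + 1) = k - 1 - s from by omega]
    by_cases h1 : s + 1 ≤ k <;> by_cases h2 : d ∣ (k - 1 - s) <;> simp [h1, h2]
  have hs2 : ∀ s ∈ hfin.toFinset, (Q * X ^ s).coeff k =
      if s ≤ k ∧ d ∣ (k - s) then (binomB b (m - 1) ((k - s) / d) : ℂ) else 0 := by
    intro s _
    rw [coeff_mul_X_pow', hQc (k - s)]
    by_cases h1 : s ≤ k <;> by_cases h2 : d ∣ (k - s) <;> simp [h1, h2]
  rw [Finset.sum_congr rfl hs1, Finset.sum_congr rfl hs2]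
  ring
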